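/- Let X ∼ N(μ, Σ) on ℝ^n with Σ positive definite partitioned into index sets S and U, and let G ∼ N(0, Σ^g) be independent noise whose block Σ^g_{SS} = σ_s² I and whose S and U blocks are independent (Σ^g_{SU} = 0). Set Z = X + G. Then for any s_i, s_j ∈ ℝ^{|S|} and λ > 1, D_λ(Law(Z | X_S = s_i) ‖ Law(Z | X_S = s_j)) = (λ/2)[ (1/σ_s²)‖s_i − s_j‖² + (s_i − s_j)ᵀ Σ_{SS}^{-1} Σ_{SU} (Σ_{U|S} + Σ^g_{UU})^{-1} Σ_{US} Σ_{SS}^{-1} (s_i − s_j) ]. -/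

import Mathlib

open MeasureTheory

/-- Rényi divergence of order `l > 1`:
`D_l(P‖Q) = (l-1)⁻¹ * log ∫ (dP/dQ)^l dQ`. -/
noncomputable def renyiDiv {Ω : Type*} [MeasurableSpace Ω] (l : ℝ) (P Q : Measure Ω) : ℝ :=
  (l - 1)⁻¹ * Real.log (∫ x, ((P.rnDeriv Q x).toReal) ^ l ∂Q)

open Matrix

/-- Density of a multivariate Gaussian `N(μ, S)` with respect to Lebesgue measure. -/
noncomputable def gaussianDensity {ι : Type*} [Fintype ι] [DecidableEq ι]
    (μ : ι → ℝ) (S : Matrix ι ι ℝ) (x : ι → ℝ) : ℝ :=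
  (Real.sqrt ((2 * Real.pi) ^ (Fintype.card ι) * S.det))⁻¹ *
    Real.exp (-(1/2) * ((x - μ) ⬝ᵥ (S⁻¹ *ᵥ (x - μ))))

/-- The multivariate Gaussian measure `N(μ, S)` on `ι → ℝ`. -/
noncomputable def multivariateGaussian {ι : Type*} [Fintype ι] [DecidableEq ι]
    (μ : ι → ℝ) (S : Matrix ι ι ℝ) : Measure (ι → ℝ) :=
  volume.withDensity (fun x => ENNReal.ofReal (gaussianDensity μ S x))

/-- The conditional law of `Z = X + G` given `X_S = s`: on the secret block `S` it is
`N(s, σ_s² I)`, independent of the `U` block which is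
`N(μ_U + Σ_US Σ_SS⁻¹ (s − μ_S), Σ_{U|S} + Σ^g_UU)`. -/
noncomputable def condLaw {m k : ℕ} (μ : (Fin m ⊕ Fin k) → ℝ)
    (S Sg : Matrix (Fin m ⊕ Fin k) (Fin m ⊕ Fin k) ℝ) (σs : ℝ) (s : Fin m → ℝ) :
    Measure ((Fin m ⊕ Fin k) → ℝ) :=
  multivariateGaussian
    (Sum.elim s ((μ ∘ Sum.inr) + S.toBlocks₂₁ *ᵥ ((S.toBlocks₁₁)⁻¹ *ᵥ (s - μ ∘ Sum.inl))))
    (Matrix.fromBlocks (σs ^ 2 • (1 : Matrix (Fin m) (Fin m) ℝ)) 0 0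
      ((S.toBlocks₂₂ - S.toBlocks₂₁ * (S.toBlocks₁₁)⁻¹ * S.toBlocks₁₂) + Sg.toBlocks₂₂))

/-- `Σ_eff = Σ_SS⁻¹ Σ_SU (Σ_{U|S} + Σ^g_UU)⁻¹ Σ_US Σ_SS⁻¹`. -/
noncomputable def SigmaEff {m k : ℕ}
    (S Sg : Matrix (Fin m ⊕ Fin k) (Fin m ⊕ Fin k) ℝ) : Matrix (Fin m) (Fin m) ℝ :=
  (S.toBlocks₁₁)⁻¹ * S.toBlocks₁₂
    * ((S.toBlocks₂₂ - S.toBlocks₂₁ * (S.toBlocks₁₁)⁻¹ * S.toBlocks₁₂) + Sg.toBlocks₂₂)⁻¹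
    * S.toBlocks₂₁ * (S.toBlocks₁₁)⁻¹


open Real
section Analytic
variable {ι : Type*} [Fintype ι] [DecidableEq ι]

lemma my_dotProduct_mulVec_left {κ : Type*} [Fintype κ] (A : Matrix ι κ ℝ) (y : κ → ℝ)
    (w : ι → ℝ) : (A *ᵥ y) ⬝ᵥ w = y ⬝ᵥ (Aᵀ *ᵥ w) := by
  rw [dotProduct_mulVec, vecMul_transpose]

lemma my_continuous_quad (A : Matrix ι ι ℝ) (μ : ι → ℝ) :
    Continuous fun x : ι → ℝ => (x - μ) ⬝ᵥ (A *ᵥ (x - μ)) := by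
  simp only [dotProduct, mulVec]
  refine continuous_finset_sum _ fun i _ => Continuous.mul ?_ (continuous_finset_sum _ fun j _ => Continuous.mul continuous_const ?_)
  · exact (continuous_apply i).sub continuous_const
  · exact (continuous_apply j).sub continuous_const

lemma my_integral_std_gaussian :
    ∫ x : ι → ℝ, Real.exp (-(1/2) * (x ⬝ᵥ x)) = Real.sqrt (2 * π) ^ Fintype.card ι := by
  have h : ∀ x : ι → ℝ, Real.exp (-(1/2) * (x ⬝ᵥ x)) = ∏ i, Real.exp (-(1/2) * (x i)^2) := by
    intro x
    rw [← Real.exp_sum]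
    congr 1
    simp only [dotProduct, Finset.mul_sum]
    exact Finset.sum_congr rfl fun i _ => by ring
  simp_rw [h]
  rw [MeasureTheory.volume_pi, MeasureTheory.integral_fintype_prod_eq_pow (ι := ι) (fun t : ℝ => Real.exp (-(1/2) * t^2))]
  congr 1
  have := integral_gaussian (1/2)
  simp only [neg_mul] at this ⊢
  rw [this]
  congr 1
  rw [div_div_eq_mul_div, div_one, mul_comm]

open scoped MatrixOrder in
lemma my_integral_exp_quad {Λ : Matrix ι ι ℝ} (hΛ : Λ.PosDef) :
    ∫ x : ι → ℝ, Real.exp (-(1/2) * (x ⬝ᵥ (Λ *ᵥ x)))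
      = Real.sqrt ((2 * π) ^ Fintype.card ι / Λ.det) := by
  set R := CFC.sqrt Λ with hR
  have hRps : R.PosSemidef := (CFC.sqrt_nonneg Λ).posSemidef
  have hRR : R * R = Λ := CFC.sqrt_mul_sqrt_self Λ hΛ.posSemidef.nonneg
  have hRsym : Rᵀ = R := by
    rw [← conjTranspose_eq_transpose_of_trivial]; exact hRps.1
  have hdetΛ : 0 < Λ.det := hΛ.det_pos
  have hdetR2 : R.det * R.det = Λ.det := by rw [← det_mul, hRR]
  have hdetRne : R.det ≠ 0 := by
    intro h; rw [h, mul_zero] at hdetR2; exact hdetΛ.ne' hdetR2.symm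
  have habs : |R.det| = Real.sqrt Λ.det := by
    rw [← hdetR2, ← sq, Real.sqrt_sq_eq_abs]
  have hdetRinv : (R⁻¹).det ≠ 0 := by
    rw [det_nonsing_inv, Ring.inverse_eq_inv]
    exact inv_ne_zero hdetRne
  have hIdet : IsUnit R.det := (isUnit_iff_ne_zero).2 hdetRne
  have hmat : R⁻¹ * (Λ * R⁻¹) = 1 := by
    rw [← hRR, ← Matrix.mul_assoc, ← Matrix.mul_assoc, Matrix.nonsing_inv_mul _ hIdet,
      Matrix.one_mul, Matrix.mul_nonsing_inv _ hIdet]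
  have hRinvsym : (R⁻¹)ᵀ = R⁻¹ := by rw [transpose_nonsing_inv, hRsym]
  set f : (ι → ℝ) → ℝ := fun x => Real.exp (-(1/2) * (x ⬝ᵥ (Λ *ᵥ x))) with hf
  have hfc : Continuous f := by
    have h2 := my_continuous_quad Λ (0 : ι → ℝ)
    simp only [sub_zero] at h2
    exact (continuous_const.mul h2).rexp
  have key : ∀ y : ι → ℝ, f ((Matrix.toLin' R⁻¹) y) = Real.exp (-(1/2) * (y ⬝ᵥ y)) := by
    intro y
    simp only [hf, Matrix.toLin'_apply]
    congr 2
    rw [mulVec_mulVec, my_dotProduct_mulVec_left, hRinvsym, mulVec_mulVec, hmat, one_mulVec]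
  have hmap := Real.map_matrix_volume_pi_eq_smul_volume_pi (M := R⁻¹) (by
    rw [det_nonsing_inv, Ring.inverse_eq_inv]; exact inv_ne_zero hdetRne)
  have hmeas : AEMeasurable (⇑(Matrix.toLin' (R⁻¹ : Matrix ι ι ℝ))) volume :=
    (LinearMap.continuous_of_finiteDimensional _).measurable.aemeasurable
  have haesm : AEStronglyMeasurable f (Measure.map (⇑(Matrix.toLin' (R⁻¹ : Matrix ι ι ℝ))) volume) :=
    hfc.aestronglyMeasurable
  have step : Real.sqrt (2 * π) ^ Fintype.card ι
      = (ENNReal.ofReal |(R⁻¹).det⁻¹|).toReal * ∫ x, f x := by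
    calc Real.sqrt (2 * π) ^ Fintype.card ι
        = ∫ y : ι → ℝ, Real.exp (-(1/2) * (y ⬝ᵥ y)) := my_integral_std_gaussian.symm
      _ = ∫ y, f ((Matrix.toLin' R⁻¹) y) := by
          refine integral_congr_ae (Filter.Eventually.of_forall fun y => ?_)
          exact (key y).symm
      _ = ∫ z, f z ∂(Measure.map (⇑(Matrix.toLin' (R⁻¹ : Matrix ι ι ℝ))) volume) :=
          (integral_map hmeas haesm).symm
      _ = (ENNReal.ofReal |(R⁻¹).det⁻¹|).toReal * ∫ x, f x := by
          rw [hmap, integral_smul_measure]; rfl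
  have hconst : (ENNReal.ofReal |(R⁻¹).det⁻¹|).toReal = Real.sqrt Λ.det := by
    rw [ENNReal.toReal_ofReal (abs_nonneg _), det_nonsing_inv, Ring.inverse_eq_inv, inv_inv, habs]
  rw [hconst] at step
  have hsq : Real.sqrt Λ.det ≠ 0 := by
    positivity
  have hint : ∫ x, f x = Real.sqrt (2 * π) ^ Fintype.card ι / Real.sqrt Λ.det := by
    rw [eq_div_iff hsq, mul_comm]; exact step.symm
  have hpow : Real.sqrt ((2 * π) ^ Fintype.card ι) = Real.sqrt (2 * π) ^ Fintype.card ι := by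
    rw [Real.sqrt_eq_rpow, Real.sqrt_eq_rpow,
      ← Real.rpow_natCast ((2*π) ^ ((1:ℝ)/2)) (Fintype.card ι),
      ← Real.rpow_natCast (2*π) (Fintype.card ι),
      ← Real.rpow_mul (by positivity), ← Real.rpow_mul (by positivity)]
    ring_nf
  rw [hint, Real.sqrt_div' _ hdetΛ.le, hpow]

lemma my_gaussianDensity_pos {μ : ι → ℝ} {S : Matrix ι ι ℝ} (hS : S.PosDef) (x : ι → ℝ) :
    0 < gaussianDensity μ S x := by
  unfold gaussianDensity
  have : 0 < (2 * π) ^ Fintype.card ι * S.det :=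
    mul_pos (pow_pos (by positivity) _) hS.det_pos
  positivity

lemma my_integral_gaussianDensity {μ : ι → ℝ} {S : Matrix ι ι ℝ} (hS : S.PosDef) :
    ∫ x, gaussianDensity μ S x = 1 := by
  unfold gaussianDensity
  rw [MeasureTheory.integral_const_mul]
  have hinv : (S⁻¹).PosDef := hS.inv
  have h1 : ∫ x : ι → ℝ, Real.exp (-(1/2) * ((x - μ) ⬝ᵥ (S⁻¹ *ᵥ (x - μ))))
      = ∫ x : ι → ℝ, Real.exp (-(1/2) * (x ⬝ᵥ (S⁻¹ *ᵥ x))) :=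
    MeasureTheory.integral_sub_right_eq_self (fun y => Real.exp (-(1/2) * (y ⬝ᵥ (S⁻¹ *ᵥ y)))) μ
  rw [h1, my_integral_exp_quad hinv]
  have hdet : (S⁻¹).det = S.det⁻¹ := by rw [det_nonsing_inv, Ring.inverse_eq_inv]
  have h2 : (2 * π) ^ Fintype.card ι / S.det⁻¹ = (2 * π) ^ Fintype.card ι * S.det := by
    field_simp
  have h3 : 0 < (2 * π) ^ Fintype.card ι * S.det :=
    mul_pos (pow_pos (by positivity) _) hS.det_pos
  rw [hdet, h2, inv_mul_cancel₀ (by positivity)]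

lemma my_quad_expand {Λ : Matrix ι ι ℝ} (hsym : Λᵀ = Λ) (u d : ι → ℝ) (c : ℝ) :
    (u - c • d) ⬝ᵥ (Λ *ᵥ (u - c • d))
      = u ⬝ᵥ (Λ *ᵥ u) - 2 * c * (u ⬝ᵥ (Λ *ᵥ d)) + c^2 * (d ⬝ᵥ (Λ *ᵥ d)) := by
  have hswap : d ⬝ᵥ (Λ *ᵥ u) = u ⬝ᵥ (Λ *ᵥ d) := by
    rw [dotProduct_mulVec]
    conv_lhs => rw [← hsym]
    rw [vecMul_transpose, dotProduct_comm]
  rw [Matrix.mulVec_sub, Matrix.mulVec_smul, sub_dotProduct, dotProduct_sub, dotProduct_sub]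
  simp only [smul_dotProduct, dotProduct_smul, smul_eq_mul]
  rw [hswap]
  ring

lemma my_integral_rpow {μ1 μ2 : ι → ℝ} {S : Matrix ι ι ℝ} (hS : S.PosDef) (l : ℝ) :
    ∫ x, (gaussianDensity μ1 S x / gaussianDensity μ2 S x) ^ l * gaussianDensity μ2 S x
      = Real.exp (1/2 * l * (l - 1) * ((μ1 - μ2) ⬝ᵥ (S⁻¹ *ᵥ (μ1 - μ2)))) := by
  have hsym : (S⁻¹)ᵀ = S⁻¹ := by
    rw [transpose_nonsing_inv]
    congr 1
    rw [← conjTranspose_eq_transpose_of_trivial]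
    exact hS.1
  set d := μ1 - μ2 with hd
  set E := Real.exp (1/2 * l * (l - 1) * (d ⬝ᵥ (S⁻¹ *ᵥ d))) with hE
  set μs := μ2 + l • d with hμs
  have hpt : ∀ x, (gaussianDensity μ1 S x / gaussianDensity μ2 S x) ^ l * gaussianDensity μ2 S x
      = E * gaussianDensity μs S x := by
    intro x
    have hcpos : 0 < (Real.sqrt ((2 * Real.pi) ^ (Fintype.card ι) * S.det))⁻¹ := by
      have : 0 < (2 * π) ^ Fintype.card ι * S.det :=
        mul_pos (pow_pos (by positivity) _) hS.det_pos
      positivity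
    set c := (Real.sqrt ((2 * Real.pi) ^ (Fintype.card ι) * S.det))⁻¹ with hc
    set A := (x - μ2) ⬝ᵥ (S⁻¹ *ᵥ (x - μ2)) with hA
    set B := (x - μ2) ⬝ᵥ (S⁻¹ *ᵥ d) with hB
    set C := d ⬝ᵥ (S⁻¹ *ᵥ d) with hC
    have hQ1 : (x - μ1) ⬝ᵥ (S⁻¹ *ᵥ (x - μ1)) = A - 2 * 1 * B + 1^2 * C := by
      have : x - μ1 = (x - μ2) - (1:ℝ) • d := by rw [hd, one_smul]; abel
      rw [this, my_quad_expand hsym]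
    have hQs : (x - μs) ⬝ᵥ (S⁻¹ *ᵥ (x - μs)) = A - 2 * l * B + l^2 * C := by
      have : x - μs = (x - μ2) - l • d := by rw [hμs]; abel
      rw [this, my_quad_expand hsym]
    have hratio : gaussianDensity μ1 S x / gaussianDensity μ2 S x
        = Real.exp (-(1/2) * (A - 2 * B + C) + (1/2) * A) := by
      unfold gaussianDensity
      rw [mul_div_mul_left _ _ (ne_of_gt hcpos), ← Real.exp_sub]
      congr 1
      rw [← hA, hQ1]
      ring
    rw [hratio, ← Real.exp_mul]
    show Real.exp _ * (c * Real.exp _) = E * (c * Real.exp _)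
    have hcomb : ∀ a b : ℝ, Real.exp a * (c * Real.exp b) = c * Real.exp (a + b) := by
      intro a b; rw [Real.exp_add]; ring
    rw [hcomb, hE, hcomb]
    congr 1
    rw [hQs, ← hA]
    ring
  simp_rw [hpt]
  rw [MeasureTheory.integral_const_mul, my_integral_gaussianDensity hS, mul_one]

lemma my_continuous_gaussianDensity (μ : ι → ℝ) (S : Matrix ι ι ℝ) :
    Continuous (gaussianDensity μ S) := by
  unfold gaussianDensity
  exact continuous_const.mul ((continuous_const.mul (my_continuous_quad S⁻¹ μ)).rexp)

lemma my_renyiDiv_gaussian {S : Matrix ι ι ℝ} (hS : S.PosDef) (μ1 μ2 : ι → ℝ)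
    {l : ℝ} (hl : 1 < l) :
    renyiDiv l (multivariateGaussian μ1 S) (multivariateGaussian μ2 S)
      = l / 2 * ((μ1 - μ2) ⬝ᵥ (S⁻¹ *ᵥ (μ1 - μ2))) := by
  set p := gaussianDensity μ1 S with hp
  set q := gaussianDensity μ2 S with hq
  have hpc : Continuous p := my_continuous_gaussianDensity μ1 S
  have hqc : Continuous q := my_continuous_gaussianDensity μ2 S
  have hppos : ∀ x, 0 < p x := fun x => my_gaussianDensity_pos hS x
  have hqpos : ∀ x, 0 < q x := fun x => my_gaussianDensity_pos hS x
  set Q := multivariateGaussian μ2 S with hQdef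
  have hQ : Q = volume.withDensity (fun x => ENNReal.ofReal (q x)) := rfl
  set h : (ι → ℝ) → ENNReal := fun x => ENNReal.ofReal (p x / q x) with hh
  have hmeas_h : Measurable h := (hpc.measurable.div hqc.measurable).ennreal_ofReal
  have hP : multivariateGaussian μ1 S = Q.withDensity h := by
    rw [hQ, ← MeasureTheory.withDensity_mul _ hqc.measurable.ennreal_ofReal hmeas_h]
    unfold multivariateGaussian
    congr 1
    funext x
    rw [Pi.mul_apply, ← ENNReal.ofReal_mul (le_of_lt (hqpos x)), mul_comm (q x),
      div_mul_cancel₀ _ (ne_of_gt (hqpos x))]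
  haveI hSF : SigmaFinite Q := by rw [hQ]; infer_instance
  have hrn : (multivariateGaussian μ1 S).rnDeriv Q =ᵐ[Q] h := by
    rw [hP]; exact Measure.rnDeriv_withDensity Q hmeas_h
  have hint1 : ∫ x, ((multivariateGaussian μ1 S).rnDeriv Q x).toReal ^ l ∂Q
      = ∫ x, (p x / q x) ^ l ∂Q := by
    refine integral_congr_ae ?_
    filter_upwards [hrn] with x hx
    rw [hx]
    simp only [hh]
    rw [ENNReal.toReal_ofReal (div_nonneg (hppos x).le (hqpos x).le)]
  have hint2 : ∫ x, (p x / q x) ^ l ∂Q = ∫ x, (p x / q x) ^ l * q x := by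
    rw [hQ]
    rw [show (fun x => ENNReal.ofReal (q x))
        = (fun x => (((fun y => (q y).toNNReal) x : NNReal) : ENNReal)) from rfl]
    rw [integral_withDensity_eq_integral_smul hqc.measurable.real_toNNReal]
    congr 1
    funext x
    rw [NNReal.smul_def, Real.coe_toNNReal _ (hqpos x).le, smul_eq_mul, mul_comm]
  unfold renyiDiv
  rw [hint1, hint2, my_integral_rpow hS l, Real.log_exp]
  have hl1 : l - 1 ≠ 0 := sub_ne_zero.2 (ne_of_gt hl)
  field_simp

end Analytic

/-- Exact CIP loss for Gaussian process priors under an additive Gaussian mechanism. -/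
theorem renyiDiv_condLaw_eq {m k : ℕ} (μ : (Fin m ⊕ Fin k) → ℝ)
    (S Sg : Matrix (Fin m ⊕ Fin k) (Fin m ⊕ Fin k) ℝ)
    (hS : S.PosDef) (hSg : Sg.PosSemidef) (σs : ℝ) (hσs : 0 < σs)
    (hSgSS : Sg.toBlocks₁₁ = σs ^ 2 • 1) (hSgSU : Sg.toBlocks₁₂ = 0)
    (si sj : Fin m → ℝ) (l : ℝ) (hl : 1 < l) :
    renyiDiv l (condLaw μ S Sg σs si) (condLaw μ S Sg σs sj)
      = l / 2 * (1 / σs ^ 2 * ((si - sj) ⬝ᵥ (si - sj))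
          + (si - sj) ⬝ᵥ (SigmaEff S Sg *ᵥ (si - sj))) := by
  classical
  set S11 := S.toBlocks₁₁ with hS11def
  set S12 := S.toBlocks₁₂ with hS12def
  set S21 := S.toBlocks₂₁ with hS21def
  set S22 := S.toBlocks₂₂ with hS22def
  have hSsym : ∀ a b, S b a = S a b := by
    intro a b
    have := congrFun (congrFun hS.1 a) b
    simpa [Matrix.conjTranspose_apply] using this
  have hS21eq : S21 = S12ᴴ := by
    ext i j
    simp only [hS21def, hS12def, Matrix.toBlocks₂₁, Matrix.toBlocks₁₂,
      Matrix.conjTranspose_apply, Matrix.of_apply, star_trivial]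
    exact hSsym _ _
  -- S11 is positive definite
  have hS11 : S11.PosDef := by
    refine Matrix.PosDef.of_dotProduct_mulVec_pos ?_ ?_
    · exact hS.1.submatrix Sum.inl
    · intro x hx
      have hvne : (Sum.elim x 0 : (Fin m ⊕ Fin k) → ℝ) ≠ 0 := by
        intro hcon
        exact hx (funext fun i => congrFun hcon (Sum.inl i))
      have hpos := hS.dotProduct_mulVec_pos hvne
      rw [← Matrix.fromBlocks_toBlocks S] at hpos
      simpa [Matrix.fromBlocks_mulVec, sumElim_dotProduct_sumElim,
        Matrix.mulVec_zero, star_trivial] using hpos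
  haveI hS11inv : Invertible S11 :=
    S11.invertibleOfIsUnitDet (isUnit_iff_ne_zero.2 hS11.det_pos.ne')
  have hS11detU : IsUnit S11.det := isUnit_iff_ne_zero.2 hS11.det_pos.ne'
  -- Schur complement positive definite
  have hSchurHerm : (S22 - S21 * S11⁻¹ * S12).IsHermitian := by
    rw [hS21eq]
    exact (hS.1.submatrix Sum.inr).sub
      (Matrix.isHermitian_conjTranspose_mul_mul S12 hS11.1.inv)
  have hSchur : (S22 - S21 * S11⁻¹ * S12).PosDef := by
    refine Matrix.PosDef.of_dotProduct_mulVec_pos hSchurHerm fun x hx => ?_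
    have hvne : (Sum.elim (-((S11⁻¹ * S12) *ᵥ x)) x : (Fin m ⊕ Fin k) → ℝ) ≠ 0 := by
      intro hcon
      exact hx (funext fun i => congrFun hcon (Sum.inr i))
    have key := hS.dotProduct_mulVec_pos hvne
    have hSblocks : S = Matrix.fromBlocks S11 S12 S12ᴴ S22 := by
      rw [← hS21eq]; exact (Matrix.fromBlocks_toBlocks S).symm
    rw [hSblocks, Matrix.dotProduct_mulVec,
      Matrix.schur_complement_eq₁₁ S12 S22 _ _ hS11.1, neg_add_cancel] at key
    simp only [star_trivial, zero_dotProduct, Matrix.vecMul_zero,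
      dotProduct_zero, zero_add] at key
    rw [star_trivial, Matrix.dotProduct_mulVec]
    rw [hS21eq]
    exact key
  -- Sg₂₂ is positive semidefinite
  have hSg22 : (Sg.toBlocks₂₂).PosSemidef := by
    refine Matrix.PosSemidef.of_dotProduct_mulVec_nonneg ?_ ?_
    · exact hSg.1.submatrix Sum.inr
    · intro x
      have := hSg.dotProduct_mulVec_nonneg (Sum.elim 0 x)
      rw [← Matrix.fromBlocks_toBlocks Sg] at this
      simpa [Matrix.fromBlocks_mulVec, sumElim_dotProduct_sumElim,
        Matrix.mulVec_zero, star_trivial] using this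
  set D := (S22 - S21 * S11⁻¹ * S12) + Sg.toBlocks₂₂ with hDdef
  have hD : D.PosDef := hSchur.add_posSemidef hSg22
  have hDdetU : IsUnit D.det := isUnit_iff_ne_zero.2 hD.det_pos.ne'
  -- the noise block σs² • 1 is positive definite
  set A := (σs ^ 2 • (1 : Matrix (Fin m) (Fin m) ℝ)) with hAdef
  have hApd : A.PosDef := by
    refine Matrix.PosDef.of_dotProduct_mulVec_pos ?_ ?_
    · rw [Matrix.IsHermitian, hAdef, Matrix.conjTranspose_smul, Matrix.conjTranspose_one,
        star_trivial]
    · intro x hx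
      have : A *ᵥ x = σs ^ 2 • x := by
        rw [hAdef, Matrix.smul_mulVec, Matrix.one_mulVec]
      rw [star_trivial, this, dotProduct_smul, smul_eq_mul]
      have hxx : 0 < x ⬝ᵥ x := by
        rcases lt_or_eq_of_le (dotProduct_self_star_nonneg x) with h | h
        · simpa [star_trivial] using h
        · exact absurd (dotProduct_self_star_eq_zero.mp (by
            simpa [star_trivial] using h.symm)) hx
      positivity
  have hAdetU : IsUnit A.det := isUnit_iff_ne_zero.2 hApd.det_pos.ne'
  -- the full covariance is positive definite
  set Sigt := Matrix.fromBlocks A 0 0 D with hSigt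
  have hSigpd : Sigt.PosDef := by
    refine Matrix.PosDef.of_dotProduct_mulVec_pos ?_ ?_
    · show Sigtᴴ = Sigt
      rw [hSigt, Matrix.fromBlocks_conjTranspose, hApd.1, hD.1]
      simp
    · intro v hv
      have hvelim : v = Sum.elim (v ∘ Sum.inl) (v ∘ Sum.inr) := (Sum.elim_comp_inl_inr v).symm
      have hquad : star v ⬝ᵥ (Sigt *ᵥ v)
          = (v ∘ Sum.inl) ⬝ᵥ (A *ᵥ (v ∘ Sum.inl)) + (v ∘ Sum.inr) ⬝ᵥ (D *ᵥ (v ∘ Sum.inr)) := by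
        rw [star_trivial]
        have hmv : Sigt *ᵥ v = Sum.elim (A *ᵥ (v ∘ Sum.inl)) (D *ᵥ (v ∘ Sum.inr)) := by
          conv_lhs => rw [hvelim]
          simp [hSigt, Matrix.fromBlocks_mulVec, Matrix.zero_mulVec, Matrix.mulVec_zero,
            Sum.elim_comp_inl, Sum.elim_comp_inr]
        rw [hmv]
        nth_rewrite 1 [hvelim]
        rw [sumElim_dotProduct_sumElim]
      rw [hquad]
      by_cases h1 : v ∘ Sum.inl = 0
      · have h2 : v ∘ Sum.inr ≠ 0 := by
          intro h2
          apply hv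
          rw [hvelim, h1, h2]
          exact Sum.elim_zero_zero
        have := hD.dotProduct_mulVec_pos h2
        rw [star_trivial] at this
        have hnn := hApd.posSemidef.dotProduct_mulVec_nonneg (v ∘ Sum.inl)
        rw [star_trivial] at hnn
        linarith
      · have := hApd.dotProduct_mulVec_pos h1
        rw [star_trivial] at this
        have hnn := hD.posSemidef.dotProduct_mulVec_nonneg (v ∘ Sum.inr)
        rw [star_trivial] at hnn
        linarith
  -- inverse of the block diagonal covariance
  have hSiginv : Sigt⁻¹ = Matrix.fromBlocks A⁻¹ 0 0 D⁻¹ := by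
    apply Matrix.inv_eq_left_inv
    rw [hSigt, Matrix.fromBlocks_multiply]
    simp only [Matrix.mul_zero, Matrix.zero_mul, add_zero, zero_add,
      Matrix.nonsing_inv_mul _ hAdetU, Matrix.nonsing_inv_mul _ hDdetU]
    exact Matrix.fromBlocks_one
  have hAinv : A⁻¹ = (σs ^ 2)⁻¹ • (1 : Matrix (Fin m) (Fin m) ℝ) := by
    apply Matrix.inv_eq_left_inv
    rw [hAdef, Matrix.smul_mul, Matrix.mul_smul, smul_smul, Matrix.one_mul,
      inv_mul_cancel₀ (by positivity : (σs ^ 2 : ℝ) ≠ 0), one_smul]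
  -- mean difference
  set e := si - sj with he
  set W := S21 * S11⁻¹ with hW
  have hmean :
      (Sum.elim si ((μ ∘ Sum.inr) + S21 *ᵥ (S11⁻¹ *ᵥ (si - μ ∘ Sum.inl))) : (Fin m ⊕ Fin k) → ℝ)
        - Sum.elim sj ((μ ∘ Sum.inr) + S21 *ᵥ (S11⁻¹ *ᵥ (sj - μ ∘ Sum.inl)))
        = Sum.elim e (W *ᵥ e) := by
    have helim_sub : ∀ (a c : Fin m → ℝ) (b d : Fin k → ℝ),
        (Sum.elim a b - Sum.elim c d : (Fin m ⊕ Fin k) → ℝ) = Sum.elim (a - c) (b - d) := by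
      intro a c b d; funext z; cases z <;> simp
    rw [helim_sub]
    have h2 : (μ ∘ Sum.inr + S21 *ᵥ (S11⁻¹ *ᵥ (si - μ ∘ Sum.inl)))
        - (μ ∘ Sum.inr + S21 *ᵥ (S11⁻¹ *ᵥ (sj - μ ∘ Sum.inl))) = W *ᵥ e := by
      rw [add_sub_add_left_eq_sub, Matrix.mulVec_mulVec, Matrix.mulVec_mulVec,
        ← Matrix.mulVec_sub, sub_sub_sub_cancel_right, ← he, hW]
    rw [h2, he]
  -- apply the Gaussian Rényi divergence formula
  have hform := my_renyiDiv_gaussian hSigpd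
    (Sum.elim si ((μ ∘ Sum.inr) + S21 *ᵥ (S11⁻¹ *ᵥ (si - μ ∘ Sum.inl))))
    (Sum.elim sj ((μ ∘ Sum.inr) + S21 *ᵥ (S11⁻¹ *ᵥ (sj - μ ∘ Sum.inl)))) hl
  unfold condLaw
  rw [hform, hmean, hSiginv]
  -- compute the quadratic form
  have hquad : (Sum.elim e (W *ᵥ e) : (Fin m ⊕ Fin k) → ℝ)
        ⬝ᵥ (Matrix.fromBlocks A⁻¹ 0 0 D⁻¹ *ᵥ Sum.elim e (W *ᵥ e))
      = e ⬝ᵥ (A⁻¹ *ᵥ e) + (W *ᵥ e) ⬝ᵥ (D⁻¹ *ᵥ (W *ᵥ e)) := by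
    simp [Matrix.fromBlocks_mulVec, sumElim_dotProduct_sumElim,
      Matrix.zero_mulVec, Matrix.mulVec_zero]
  rw [hquad]
  have hterm1 : e ⬝ᵥ (A⁻¹ *ᵥ e) = 1 / σs ^ 2 * (e ⬝ᵥ e) := by
    rw [hAinv, Matrix.smul_mulVec, Matrix.one_mulVec, dotProduct_smul,
      smul_eq_mul, one_div]
  have hWT : Wᵀ = S11⁻¹ * S12 := by
    rw [hW, Matrix.transpose_mul, Matrix.transpose_nonsing_inv]
    congr 1
    · rw [show S11ᵀ = S11 by
        rw [← Matrix.conjTranspose_eq_transpose_of_trivial]; exact hS11.1]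
    · rw [show S21ᵀ = S12 by
        rw [hS21eq, ← Matrix.conjTranspose_eq_transpose_of_trivial,
          Matrix.conjTranspose_conjTranspose]]
  have hterm2 : (W *ᵥ e) ⬝ᵥ (D⁻¹ *ᵥ (W *ᵥ e)) = e ⬝ᵥ (SigmaEff S Sg *ᵥ e) := by
    rw [Matrix.mulVec_mulVec, my_dotProduct_mulVec_left, Matrix.mulVec_mulVec, hWT]
    congr 2
    unfold SigmaEff
    rw [← hS11def, ← hS12def, ← hS21def, ← hS22def, ← hDdef, hW]
    simp only [Matrix.mul_assoc]
  rw [hterm1, hterm2]
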